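/- Let G be a group that is boundedly presented by a symmetric generating subset S (i.e. S = S⁻¹). Let N be a normal subgroup of G, and suppose that for some positive integer n, N is generated as a normal subgroup of G by N ∩ S^n. Then the quotient group G/N is boundedly presented by the image of S under the canonical projection G → G/N. -/

import Mathlib

open scoped Pointwise

/-- A group `G` is *boundedly presented* by a subset `S ⊆ G` if there are an integer `n` and a
set `R` of words of length at most `n` in the letters `S ∪ S⁻¹`, each representing the identity
in `G`, such that the canonical homomorphism from the quotient of the free group on `S` by the
normal closure of `R` onto `G` is an isomorphism. -/
def BoundedlyPresentedBy (G : Type*) [Group G] (S : Set G) : Prop :=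
  ∃ (n : ℕ) (R : Set (FreeGroup S)),
    (∀ r ∈ R, ∃ w : List (S × Bool), FreeGroup.mk w = r ∧ w.length ≤ n) ∧
    Function.Surjective (FreeGroup.lift (fun s : S => (s : G))) ∧
    MonoidHom.ker (FreeGroup.lift (fun s : S => (s : G))) = Subgroup.normalClosure R

/-- if `G` is boundedly presented by a symmetric generating subset `S` and the
normal subgroup `N` is generated, as a normal subgroup, by `N ∩ S ^ n` for some positive `n`,
then `G / N` is boundedly presented by the image of `S`. -/
theorem quotient_boundedlyPresentedBy_image {G : Type*} [Group G] (S : Set G)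
    (hsymm : S⁻¹ = S) (hgen : Subgroup.closure S = ⊤) (hS : BoundedlyPresentedBy G S)
    (N : Subgroup G) [N.Normal] (n : ℕ) (hn : 0 < n)
    (hN : Subgroup.normalClosure ((N : Set G) ∩ S ^ n) = N) :
    BoundedlyPresentedBy (G ⧸ N) ((QuotientGroup.mk : G → G ⧸ N) '' S) := by
  classical
  obtain ⟨m, R, hR, hsurj, hker⟩ := hS
  set φ : FreeGroup S →* G := FreeGroup.lift (fun s : S => (s : G)) with hφ
  set T : Set (G ⧸ N) := (QuotientGroup.mk : G → G ⧸ N) '' S with hT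
  set φ' : FreeGroup T →* G ⧸ N := FreeGroup.lift (fun t : T => (t : G ⧸ N)) with hφ'
  set f : S → T := fun s => ⟨QuotientGroup.mk s.1, ⟨s.1, s.2, rfl⟩⟩ with hf
  set p : FreeGroup S →* FreeGroup T := FreeGroup.map f with hp
  set ψ : FreeGroup S →* G ⧸ N := (QuotientGroup.mk' N).comp φ with hψ
  -- compatibility
  have hcomp : φ'.comp p = ψ := by
    apply FreeGroup.ext_hom
    intro a
    simp [p, f, φ, φ', ψ]
  -- surjectivity of f and p
  have hfsurj : Function.Surjective f := by
    rintro ⟨_, s, hs, rfl⟩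
    exact ⟨⟨s, hs⟩, rfl⟩
  choose sec hsec using hfsurj
  have hpsurj : Function.Surjective p := by
    intro x
    refine ⟨FreeGroup.map sec x, ?_⟩
    show FreeGroup.map f (FreeGroup.map sec x) = x
    rw [FreeGroup.map.comp]
    have : (f ∘ sec) = id := funext fun t => hsec t
    rw [this, FreeGroup.map.id]
  have hψsurj : Function.Surjective ψ := by
    exact (QuotientGroup.mk'_surjective N).comp hsurj
  -- bounded relators
  set R₀ : Set (FreeGroup S) :=
    {x | ψ x = 1 ∧ ∃ w : List (S × Bool), FreeGroup.mk w = x ∧ w.length ≤ max m n} with hR₀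
  have hRsub : R ⊆ R₀ := by
    intro r hr
    have hr1 : φ r = 1 := by
      have : r ∈ MonoidHom.ker φ := hker ▸ Subgroup.subset_normalClosure hr
      exact this
    obtain ⟨w, hw1, hw2⟩ := hR r hr
    exact ⟨by simp [ψ, hr1], w, hw1, hw2.trans (le_max_left m n)⟩
  have hkerφ : MonoidHom.ker φ ≤ Subgroup.normalClosure R₀ := by
    rw [hker]
    exact Subgroup.normalClosure_mono hRsub
  -- key: ker ψ = normalClosure R₀
  have hkerψ : MonoidHom.ker ψ = Subgroup.normalClosure R₀ := by
    apply le_antisymm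
    · -- N ≤ φ (normalClosure R₀)
      have hnorm : (Subgroup.normalClosure R₀).map φ |>.Normal :=
        Subgroup.Normal.map inferInstance φ hsurj
      have hNle : N ≤ (Subgroup.normalClosure R₀).map φ := by
        rw [← hN]
        refine Subgroup.normalClosure_le_normal ?_
        rintro g ⟨hgN, hgS⟩
        obtain ⟨c, hc⟩ := Set.mem_pow.mp hgS
        refine ⟨FreeGroup.mk (List.ofFn fun i => ((c i : S), true)), ?_, ?_⟩
        · apply Subgroup.subset_normalClosure
          have hφg : φ (FreeGroup.mk (List.ofFn fun i => ((c i : S), true))) = g := by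
            rw [← hc]
            simp [φ, FreeGroup.lift_mk, List.map_ofFn, Function.comp_def]
          refine ⟨?_, _, rfl, by simp⟩
          simp only [ψ, MonoidHom.comp_apply, hφg, QuotientGroup.mk'_apply, QuotientGroup.eq_one_iff]
          exact hgN
        · rw [← hc]
          simp [φ, FreeGroup.lift_mk, List.map_ofFn, Function.comp_def]
      intro x hx
      have hx' : φ x ∈ N := by
        rwa [hψ, ← MonoidHom.comap_ker, QuotientGroup.ker_mk', Subgroup.mem_comap] at hx
      have : x ∈ Subgroup.comap φ ((Subgroup.normalClosure R₀).map φ) :=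
        Subgroup.mem_comap.mpr (hNle hx')
      rwa [Subgroup.comap_map_eq, sup_eq_left.mpr hkerφ] at this
    · refine Subgroup.normalClosure_le_normal ?_
      intro x hx
      exact hx.1
  -- assemble
  refine ⟨max m n, p '' R₀, ?_, ?_, ?_⟩
  · rintro r ⟨x, ⟨-, w, rfl, hwlen⟩, rfl⟩
    refine ⟨w.map fun y => (f y.1, y.2), ?_, by simpa using hwlen⟩
    exact (FreeGroup.map.mk).symm
  · have := hψsurj
    rw [← hcomp, MonoidHom.coe_comp] at this
    exact Function.Surjective.of_comp this
  · have h1 : Subgroup.comap p (MonoidHom.ker φ') = MonoidHom.ker ψ := by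
      rw [MonoidHom.comap_ker, hcomp]
    have h2 : (MonoidHom.ker ψ).map p = MonoidHom.ker φ' := by
      rw [← h1, Subgroup.map_comap_eq, MonoidHom.range_eq_top_of_surjective p hpsurj, top_inf_eq]
    rw [← h2, hkerψ, Subgroup.map_normalClosure _ _ hpsurj]
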